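/- Let q ≥ 2 and let f ∈ L²(ℝ₊^q) be mirror symmetric with ‖f‖ = 1, and let F = I_q(f) be the corresponding Wigner integral. Then E[F⁴] = 2 + Σ_{r=1}^{q−1} ‖f ⌢_r f‖²_{L²(ℝ₊^{2q−2r})}. -/

import Mathlib

open MeasureTheory

noncomputable section

/-- Lebesgue measure on `ℝ₊ⁿ`, represented as a measure on `Fin n → ℝ`. -/
def mPos (n : ℕ) : Measure (Fin n → ℝ) :=
  Measure.pi fun _ => volume.restrict (Set.Ici (0 : ℝ))

/-- Extension of a finite tuple by zeros. -/
def ext0 {n : ℕ} (t : Fin n → ℝ) : ℕ → ℝ := fun i => if h : i < n then t ⟨i, h⟩ else 0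

/-- A kernel in `q` variables is represented as a function on infinite tuples
that depends only on the first `q` coordinates. -/
def KernelDependsOn (q : ℕ) (f : (ℕ → ℝ) → ℝ) : Prop :=
  ∀ s t : ℕ → ℝ, (∀ i < q, s i = t i) → f s = f t

/-- `f`, a kernel in `q` variables, belongs to `L²(ℝ₊^q)`. -/
def InL2 (q : ℕ) (f : (ℕ → ℝ) → ℝ) : Prop :=
  MemLp (fun t : Fin q → ℝ => f (ext0 t)) 2 (mPos q)

/-- The inner product of two kernels in `n` variables, in `L²(ℝ₊ⁿ)`. -/
def ip (n : ℕ) (f g : (ℕ → ℝ) → ℝ) : ℝ :=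
  ∫ t : Fin n → ℝ, f (ext0 t) * g (ext0 t) ∂ mPos n

/-- The `r`-th contraction `f ⌢_r g` of a kernel `f` in `p` variables with a kernel `g`:
the last `r` arguments of `f` are integrated against the first `r` arguments of `g`
(in reversed order).  If `g` has `q` variables, the result has `p + q - 2r` variables. -/
def contr (p r : ℕ) (f g : (ℕ → ℝ) → ℝ) : (ℕ → ℝ) → ℝ :=
  fun t => ∫ x : Fin r → ℝ,
    f (fun i => if i < p - r then t i else ext0 x (i - (p - r))) *
    g (fun j => if j < r then ext0 x (r - 1 - j) else t (j - r + (p - r)))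
    ∂ mPos r

/-- The adjoint (mirror) `f*` of a kernel in `q` variables. -/
def mirror (q : ℕ) (f : (ℕ → ℝ) → ℝ) : (ℕ → ℝ) → ℝ :=
  fun t => f (fun i => if i < q then t (q - 1 - i) else t i)

/-- A kernel in `q` variables is mirror symmetric if `f = f*` a.e. on `ℝ₊^q`. -/
def MirrorSymm (q : ℕ) (f : (ℕ → ℝ) → ℝ) : Prop :=
  ∀ᵐ t ∂ mPos q, f (ext0 t) = mirror q f (ext0 t)

end

instance mPos.sigmaFinite (n : ℕ) : SigmaFinite (mPos n) := by
  unfold mPos; infer_instance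

lemma dependsOn_mirror {q : ℕ} {f : (ℕ → ℝ) → ℝ} (h : KernelDependsOn q f) :
    KernelDependsOn q (mirror q f) := by
  intro s t hst
  unfold mirror
  apply h
  intro i hi
  rw [if_pos hi, if_pos hi]
  exact hst _ (by omega)

lemma pullback_null {q m k : ℕ} (σ : Fin q → Fin m ⊕ Fin k) (hσ : Function.Injective σ)
    {P : (Fin q → ℝ) → Prop} (hP : ∀ᵐ u ∂ mPos q, P u) :
    ∀ᵐ p ∂ (mPos m).prod (mPos k), P (fun i => Sum.elim p.1 p.2 (σ i)) := by
  classical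
  rw [ae_iff] at hP ⊢
  obtain ⟨B, hAB, hBm, hB0⟩ := exists_measurable_superset_of_null hP
  set ν : Measure ℝ := volume.restrict (Set.Ici (0 : ℝ)) with hν
  set c : (Fin m → ℝ) × (Fin k → ℝ) → (Fin q → ℝ) := fun p i => Sum.elim p.1 p.2 (σ i) with hc
  have hcm : Measurable c := by
    apply measurable_pi_lambda
    intro i
    rcases h : σ i with a | b
    · simp only [hc, h, Sum.elim_inl]; exact (measurable_pi_apply a).comp measurable_fst
    · simp only [hc, h, Sum.elim_inr]; exact (measurable_pi_apply b).comp measurable_snd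
  have hsub : {p : (Fin m → ℝ) × (Fin k → ℝ) | ¬ P (fun i => Sum.elim p.1 p.2 (σ i))} ⊆ c ⁻¹' B :=
    fun p hp => hAB hp
  refine measure_mono_null hsub ?_
  have e1 := measurePreserving_sumPiEquivProdPi (fun _ : Fin m ⊕ Fin k => ν)
  have h1 : ((mPos m).prod (mPos k)) (c ⁻¹' B)
      = (Measure.pi fun _ : Fin m ⊕ Fin k => ν)
        ((MeasurableEquiv.sumPiEquivProdPi (fun _ : Fin m ⊕ Fin k => ℝ)) ⁻¹' (c ⁻¹' B)) := by
    rw [e1.measure_preimage (hcm hBm).nullMeasurableSet]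
    rfl
  have h2 : (MeasurableEquiv.sumPiEquivProdPi (fun _ : Fin m ⊕ Fin k => ℝ)) ⁻¹' (c ⁻¹' B)
      = (fun (u : Fin m ⊕ Fin k → ℝ) (i : Fin q) => u (σ i)) ⁻¹' B := by
    ext u
    have : c ((MeasurableEquiv.sumPiEquivProdPi (fun _ : Fin m ⊕ Fin k => ℝ)) u)
        = fun i => u (σ i) := by
      funext i
      rcases h : σ i with a | b <;>
        simp [hc, h, MeasurableEquiv.coe_sumPiEquivProdPi, Equiv.sumPiEquivProdPi]
    simp [this]
  rw [h1, h2]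
  -- now kill the pi measure of the preimage under coordinate selection
  set p : (Fin m ⊕ Fin k) → Prop := fun j => j ∈ Set.range σ with hp
  set d : ({j // p j} → ℝ) → (Fin q → ℝ) := fun v i => v ⟨σ i, ⟨i, rfl⟩⟩ with hd
  have hdm : Measurable d := measurable_pi_lambda _ fun i => measurable_pi_apply _
  have e2 := measurePreserving_piEquivPiSubtypeProd (fun _ : Fin m ⊕ Fin k => ν) p
  have h3 : (fun (u : Fin m ⊕ Fin k → ℝ) (i : Fin q) => u (σ i)) ⁻¹' B
      = (MeasurableEquiv.piEquivPiSubtypeProd (fun _ : Fin m ⊕ Fin k => ℝ) p) ⁻¹'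
        ((d ⁻¹' B) ×ˢ (Set.univ : Set ({j // ¬ p j} → ℝ))) := by
    ext u
    simp only [Set.mem_preimage, Set.mem_prod, Set.mem_univ, and_true]
    rfl
  rw [h3, e2.measure_preimage (((hdm hBm).prod MeasurableSet.univ)).nullMeasurableSet,
    Measure.prod_prod]
  have h4 : (Measure.pi fun _ : Subtype p => ν) (d ⁻¹' B) = 0 := by
    have e3 := measurePreserving_piCongrLeft (fun _ : Subtype p => ν) (Equiv.ofInjective σ hσ)
    have h5 : (MeasurableEquiv.piCongrLeft (fun _ => ℝ) (Equiv.ofInjective σ hσ)) ⁻¹' (d ⁻¹' B)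
        = B := by
      ext w
      simp only [Set.mem_preimage]
      have : d ((MeasurableEquiv.piCongrLeft (fun _ => ℝ) (Equiv.ofInjective σ hσ)) w) = w := by
        funext i
        have hi : (⟨σ i, ⟨i, rfl⟩⟩ : Subtype p) = (Equiv.ofInjective σ hσ) i := by
          apply Subtype.ext; simp
        simp only [hd, hi]
        exact MeasurableEquiv.piCongrLeft_apply_apply (β := fun _ : Set.range σ => ℝ)
          (Equiv.ofInjective σ hσ) w i
      rw [this]
    rw [← e3.measure_preimage (hdm hBm).nullMeasurableSet, h5]
    exact hB0
  refine mul_eq_zero_of_left ?_ _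
  convert h4 using 2
  congr!
def σa (q r : ℕ) (hr : r ≤ q) : Fin q → Fin (q+q-2*r) ⊕ Fin r :=
  fun i => if h : (i : ℕ) < q - r then .inl ⟨i, by omega⟩
    else .inr ⟨i - (q - r), by have := i.isLt; omega⟩

def σb (q r : ℕ) (hr : r ≤ q) : Fin q → Fin (q+q-2*r) ⊕ Fin r :=
  fun j => if h : (j : ℕ) < r then .inr ⟨r - 1 - j, by omega⟩
    else .inl ⟨(j : ℕ) - r + (q - r), by have := j.isLt; omega⟩

lemma σa_inj (q r : ℕ) (hr : r ≤ q) : Function.Injective (σa q r hr) := by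
  intro i j h
  unfold σa at h
  have hi := i.isLt; have hj := j.isLt
  split_ifs at h with h1 h2 h2 <;>
    simp only [Sum.inl.injEq, Sum.inr.injEq, Fin.mk.injEq, reduceCtorEq] at h <;>
    exact Fin.ext (by omega)

lemma σb_inj (q r : ℕ) (hr : r ≤ q) : Function.Injective (σb q r hr) := by
  intro i j h
  unfold σb at h
  have hi := i.isLt; have hj := j.isLt
  split_ifs at h with h1 h2 h2 <;>
    simp only [Sum.inl.injEq, Sum.inr.injEq, Fin.mk.injEq, reduceCtorEq] at h <;>
    exact Fin.ext (by omega)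

lemma slotA_eq {q r : ℕ} (hr : r ≤ q) {g : (ℕ → ℝ) → ℝ} (hg : KernelDependsOn q g)
    (t : Fin (q+q-2*r) → ℝ) (x : Fin r → ℝ) :
    g (fun i => if i < q - r then ext0 t i else ext0 x (i - (q - r)))
      = g (ext0 fun i : Fin q => Sum.elim t x (σa q r hr i)) := by
  refine hg _ _ fun i hi => ?_
  simp only [ext0, σa, Fin.val_mk, dif_pos hi]
  split_ifs with h1 h2 h3 <;>
    simp only [Sum.elim_inl, Sum.elim_inr] <;>
    first
      | rfl
      | (exfalso; omega)
      | (congr 1; omega)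
      | (congr 1; simp only [Fin.mk.injEq]; omega)

lemma slotB_eq {q r : ℕ} (hr : r ≤ q) {g : (ℕ → ℝ) → ℝ} (hg : KernelDependsOn q g)
    (t : Fin (q+q-2*r) → ℝ) (x : Fin r → ℝ) :
    g (fun j => if j < r then ext0 x (r - 1 - j) else ext0 t (j - r + (q - r)))
      = g (ext0 fun j : Fin q => Sum.elim t x (σb q r hr j)) := by
  refine hg _ _ fun j hj => ?_
  simp only [ext0, σb, Fin.val_mk, dif_pos hj]
  split_ifs with h1 h2 h3 <;>
    simp only [Sum.elim_inl, Sum.elim_inr] <;>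
    first
      | rfl
      | (exfalso; omega)
      | (congr 1; omega)
      | (congr 1; simp only [Fin.mk.injEq]; omega)

lemma contr_congr_ae {q r : ℕ} (hr : r ≤ q) {f : (ℕ → ℝ) → ℝ} (hdep : KernelDependsOn q f)
    (hmir : MirrorSymm q f) :
    ∀ᵐ t ∂ mPos (q+q-2*r),
      contr q r (mirror q f) (mirror q f) (ext0 t) = contr q r f f (ext0 t) := by
  have hmir' : ∀ᵐ u ∂ mPos q, f (ext0 u) = mirror q f (ext0 u) := hmir
  have ha := pullback_null (σa q r hr) (σa_inj q r hr) hmir'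
  have hb := pullback_null (σb q r hr) (σb_inj q r hr) hmir'
  have h2 := MeasureTheory.Measure.ae_ae_of_ae_prod (ha.and hb)
  filter_upwards [h2] with t ht
  unfold contr
  refine integral_congr_ae ?_
  filter_upwards [ht] with x hx
  rw [slotA_eq hr hdep t x, slotB_eq hr hdep t x,
      slotA_eq hr (dependsOn_mirror hdep) t x, slotB_eq hr (dependsOn_mirror hdep) t x,
      ← hx.1, ← hx.2]
lemma mirror_contr {q r : ℕ} (hr : r ≤ q) {f : (ℕ → ℝ) → ℝ} (hdep : KernelDependsOn q f) (t : ℕ → ℝ) :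
    mirror (q+q-2*r) (contr q r f f) t = contr q r (mirror q f) (mirror q f) t := by
  unfold mirror contr
  refine integral_congr_ae (Filter.Eventually.of_forall fun x => ?_)
  beta_reduce
  rw [mul_comm]
  congr 1
  · refine hdep _ _ fun i hi => ?_
    simp only [ext0]
    split_ifs <;>
      first
        | rfl
        | (exfalso; omega)
        | (congr 1; omega)
        | (congr 1; simp only [Fin.mk.injEq]; omega)
  · refine hdep _ _ fun i hi => ?_
    simp only [ext0]
    split_ifs <;>
      first
        | rfl
        | (exfalso; omega)
        | (congr 1; omega)
        | (congr 1; simp only [Fin.mk.injEq]; omega)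
lemma T_eq {q r : ℕ} (hr : r ≤ q) {f : (ℕ → ℝ) → ℝ} (hdep : KernelDependsOn q f)
    (hmir : MirrorSymm q f) :
    ip (q+q-2*r) (mirror (q+q-2*r) (contr q r f f)) (contr q r f f)
      = ip (q+q-2*r) (contr q r f f) (contr q r f f) := by
  have hA : mirror (q+q-2*r) (contr q r f f) = contr q r (mirror q f) (mirror q f) :=
    funext (mirror_contr hr hdep)
  rw [hA]
  unfold ip
  refine integral_congr_ae ?_
  filter_upwards [contr_congr_ae hr hdep hmir] with t ht
  rw [ht]

lemma mPos_zero_univ : mPos 0 Set.univ = 1 := by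
  unfold mPos
  rw [Measure.pi_univ]
  simp

lemma ip_contr_last {q : ℕ} {f : (ℕ → ℝ) → ℝ} (hdep : KernelDependsOn q f) (hmir : MirrorSymm q f)
    (hnorm : ip q f f = 1) :
    ip (q+q-2*q) (contr q q f f) (contr q q f f) = 1 := by
  have hmir' : ∀ᵐ u ∂ mPos q, f (ext0 u) = mirror q f (ext0 u) := hmir
  have hval : ∀ t : ℕ → ℝ, contr q q f f t = 1 := by
    intro t
    unfold contr
    have h1 : ∀ x : Fin q → ℝ,
        (f fun i => if i < q - q then t i else ext0 x (i - (q - q))) *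
          (f fun j => if j < q then ext0 x (q - 1 - j) else t (j - q + (q - q)))
        = f (ext0 x) * mirror q f (ext0 x) := by
      intro x
      congr 1
      · refine hdep _ _ fun i hi => ?_
        simp only [ext0]
        split_ifs <;>
          first
            | rfl
            | (exfalso; omega)
            | (congr 1; omega)
            | (congr 1; simp only [Fin.mk.injEq]; omega)
      · unfold mirror
        refine hdep _ _ fun i hi => ?_
        simp only [ext0]
        split_ifs <;>
          first
            | rfl
            | (exfalso; omega)
            | (congr 1; omega)
            | (congr 1; simp only [Fin.mk.injEq]; omega)
    refine Eq.trans (integral_congr_ae (Filter.Eventually.of_forall h1)) ?_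
    have h2 : ∫ x : Fin q → ℝ, f (ext0 x) * mirror q f (ext0 x) ∂ mPos q
        = ∫ x : Fin q → ℝ, f (ext0 x) * f (ext0 x) ∂ mPos q := by
      refine integral_congr_ae ?_
      filter_upwards [hmir'] with u hu
      rw [← hu]
    rw [h2]
    exact hnorm
  rw [show q+q-2*q = 0 by omega]
  unfold ip
  simp only [hval, mul_one]
  rw [integral_const, measureReal_def, mPos_zero_univ]
  simp

lemma ip_contr_first {q : ℕ} {f : (ℕ → ℝ) → ℝ} (hdep : KernelDependsOn q f)
    (hnorm : ip q f f = 1) :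
    ip (q+q-2*0) (contr q 0 f f) (contr q 0 f f) = 1 := by
  have hval : ∀ t : Fin (q+q-2*0) → ℝ, contr q 0 f f (ext0 t) =
      f (ext0 fun i : Fin q => t (Fin.castAdd q i)) * f (ext0 fun j : Fin q => t (Fin.natAdd q j)) := by
    intro t
    unfold contr
    have h1 : ∀ x : Fin 0 → ℝ,
        (f fun i => if i < q - 0 then ext0 t i else ext0 x (i - (q - 0))) *
          (f fun j => if j < 0 then ext0 x (0 - 1 - j) else ext0 t (j - 0 + (q - 0)))
        = f (ext0 fun i : Fin q => t (Fin.castAdd q i)) *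
            f (ext0 fun j : Fin q => t (Fin.natAdd q j)) := by
      intro x
      congr 1
      · refine hdep _ _ fun i hi => ?_
        simp only [ext0, Fin.castAdd, Fin.castLE, Fin.val_mk]
        split_ifs <;>
          first
            | rfl
            | (exfalso; omega)
            | (congr 1; omega)
            | (congr 1; simp only [Fin.mk.injEq]; omega)
      · refine hdep _ _ fun i hi => ?_
        simp only [ext0, Fin.natAdd, Fin.val_mk]
        split_ifs <;>
          first
            | rfl
            | (exfalso; omega)
            | (congr 1; omega)
            | (congr 1; simp only [Fin.mk.injEq]; omega)
    refine Eq.trans (integral_congr_ae (Filter.Eventually.of_forall h1)) ?_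
    rw [integral_const, measureReal_def, mPos_zero_univ]
    simp
  unfold ip
  set ν : Measure ℝ := volume.restrict (Set.Ici (0 : ℝ)) with hν
  let e : ((Fin q → ℝ) × (Fin q → ℝ)) ≃ᵐ (Fin (q+q) → ℝ) :=
    (MeasurableEquiv.sumPiEquivProdPi (fun _ : Fin q ⊕ Fin q => ℝ)).symm.trans
      (MeasurableEquiv.piCongrLeft (fun _ => ℝ) finSumFinEquiv)
  have hpres : MeasurePreserving e ((mPos q).prod (mPos q)) (mPos (q+q)) :=
    (measurePreserving_piCongrLeft (fun _ => ν) finSumFinEquiv).comp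
      (measurePreserving_sumPiEquivProdPi_symm (fun _ => ν))
  have hgoal : ∫ t : Fin (q+q-2*0) → ℝ,
      contr q 0 f f (ext0 t) * contr q 0 f f (ext0 t) ∂ mPos (q+q-2*0)
      = ∫ t : Fin (q+q) → ℝ,
        ((f (ext0 fun i : Fin q => t (Fin.castAdd q i))) * (f (ext0 fun i : Fin q => t (Fin.castAdd q i)))) *
        ((f (ext0 fun j : Fin q => t (Fin.natAdd q j))) * (f (ext0 fun j : Fin q => t (Fin.natAdd q j))))
        ∂ mPos (q+q) := by
    refine integral_congr_ae (Filter.Eventually.of_forall fun t => ?_)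
    beta_reduce
    rw [hval]
    ring
  have hcomp := hpres.integral_comp e.measurableEmbedding
    (fun t : Fin (q+q) → ℝ =>
      ((f (ext0 fun i : Fin q => t (Fin.castAdd q i))) * (f (ext0 fun i : Fin q => t (Fin.castAdd q i)))) *
      ((f (ext0 fun j : Fin q => t (Fin.natAdd q j))) * (f (ext0 fun j : Fin q => t (Fin.natAdd q j)))))
  rw [hgoal, ← hcomp]
  have he1 : ∀ (p : (Fin q → ℝ) × (Fin q → ℝ)) (i : Fin q), e p (Fin.castAdd q i) = p.1 i := by
    intro p i
    show (MeasurableEquiv.piCongrLeft (fun _ => ℝ) finSumFinEquiv)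
      ((MeasurableEquiv.sumPiEquivProdPi (fun _ : Fin q ⊕ Fin q => ℝ)).symm p) (Fin.castAdd q i) = p.1 i
    rw [← finSumFinEquiv_apply_left]
    rw [MeasurableEquiv.piCongrLeft_apply_apply (β := fun _ : Fin (q+q) => ℝ) finSumFinEquiv]
    rfl
  have he2 : ∀ (p : (Fin q → ℝ) × (Fin q → ℝ)) (j : Fin q), e p (Fin.natAdd q j) = p.2 j := by
    intro p j
    show (MeasurableEquiv.piCongrLeft (fun _ => ℝ) finSumFinEquiv)
      ((MeasurableEquiv.sumPiEquivProdPi (fun _ : Fin q ⊕ Fin q => ℝ)).symm p) (Fin.natAdd q j) = p.2 j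
    rw [← finSumFinEquiv_apply_right]
    rw [MeasurableEquiv.piCongrLeft_apply_apply (β := fun _ : Fin (q+q) => ℝ) finSumFinEquiv]
    rfl
  have hsplit : ∫ p, ((f (ext0 fun i : Fin q => e p (Fin.castAdd q i))) * (f (ext0 fun i : Fin q => e p (Fin.castAdd q i)))) *
        ((f (ext0 fun j : Fin q => e p (Fin.natAdd q j))) * (f (ext0 fun j : Fin q => e p (Fin.natAdd q j))))
        ∂ ((mPos q).prod (mPos q))
      = ∫ p : (Fin q → ℝ) × (Fin q → ℝ), ((f (ext0 p.1)) * (f (ext0 p.1))) * ((f (ext0 p.2)) * (f (ext0 p.2)))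
        ∂ ((mPos q).prod (mPos q)) := by
    refine integral_congr_ae (Filter.Eventually.of_forall fun p => ?_)
    have e1 : (fun i : Fin q => e p (Fin.castAdd q i)) = p.1 := funext fun i => he1 p i
    have e2 : (fun j : Fin q => e p (Fin.natAdd q j)) = p.2 := funext fun j => he2 p j
    beta_reduce
    rw [e1, e2]
  rw [hsplit, integral_prod_mul (μ := mPos q) (ν := mPos q)
    (f := fun u : Fin q → ℝ => f (ext0 u) * f (ext0 u)) (g := fun u : Fin q → ℝ => f (ext0 u) * f (ext0 u))]
  have : ∫ u : Fin q → ℝ, f (ext0 u) * f (ext0 u) ∂ mPos q = 1 := hnorm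
  rw [this, one_mul]
/-- For `q ≥ 2` and a mirror-symmetric unit-norm `f ∈ L²(ℝ₊^q)`, the fourth moment of the
Wigner integral `F = I_q(f)` satisfies `E[F⁴] = 2 + Σ_{r=1}^{q-1} ‖f ⌢_r f‖²`.
The Wigner integrals are axiomatized by: the multiplication formula, the isometry
`E[I_q(f)* I_q(g)] = ⟨f*, g⟩`, orthogonality of different orders, centeredness, and
`I_0` of a constant kernel being that constant. -/
theorem stmt14 {A : Type*} [Ring A] [Algebra ℝ A]
    (E : A →ₗ[ℝ] ℝ) (I : ℕ → ((ℕ → ℝ) → ℝ) → A)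
    (hE1 : E 1 = 1)
    (hmul : ∀ p q (f g : (ℕ → ℝ) → ℝ),
      I p f * I q g = ∑ r ∈ Finset.range (min p q + 1), I (p + q - 2*r) (contr p r f g))
    (hiso : ∀ q (f g : (ℕ → ℝ) → ℝ), E (I q f * I q g) = ip q (mirror q f) g)
    (horth : ∀ p q (f g : (ℕ → ℝ) → ℝ), p ≠ q → E (I p f * I q g) = 0)
    (hcen : ∀ q (f : (ℕ → ℝ) → ℝ), 1 ≤ q → E (I q f) = 0)
    (hzero : ∀ f : (ℕ → ℝ) → ℝ, I 0 f = f (fun _ => 0) • (1 : A))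
    (q : ℕ) (hq : 2 ≤ q) (f : (ℕ → ℝ) → ℝ)
    (hdep : KernelDependsOn q f) (hf : InL2 q f) (hmir : MirrorSymm q f)
    (hnorm : ip q f f = 1) :
    E ((I q f) ^ 4)
      = 2 + ∑ r ∈ Finset.Icc 1 (q-1), ip (2*q-2*r) (contr q r f f) (contr q r f f) := by
  have expand : (I q f) ^ 4
      = (∑ r ∈ Finset.range (q + 1), I (q + q - 2*r) (contr q r f f)) *
        (∑ s ∈ Finset.range (q + 1), I (q + q - 2*s) (contr q s f f)) := by
    have h2 : (I q f) ^ 4 = ((I q f) * (I q f)) * ((I q f) * (I q f)) := by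
      rw [show (4 : ℕ) = 2 + 2 from rfl, pow_add, pow_two]
    rw [h2, hmul q q f f, min_self]
  have step1 : E ((I q f) ^ 4)
      = ∑ r ∈ Finset.range (q + 1),
          ip (q + q - 2*r) (contr q r f f) (contr q r f f) := by
    rw [expand, Finset.sum_mul_sum, map_sum]
    refine Finset.sum_congr rfl fun r hr => ?_
    rw [map_sum, Finset.sum_eq_single r]
    · rw [hiso, T_eq (by simp only [Finset.mem_range] at hr; omega) hdep hmir]
    · intro s hs hsr
      refine horth _ _ _ _ ?_
      simp only [Finset.mem_range] at hr hs
      omega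
    · intro h
      exact absurd hr h
  rw [step1]
  have hsplit : Finset.range (q + 1)
      = insert 0 (insert q (Finset.Icc 1 (q - 1))) := by
    ext i
    simp only [Finset.mem_range, Finset.mem_insert, Finset.mem_Icc]
    omega
  rw [hsplit, Finset.sum_insert, Finset.sum_insert]
  · rw [ip_contr_first hdep hnorm, ip_contr_last hdep hmir hnorm]
    have : ∀ r ∈ Finset.Icc 1 (q - 1),
        ip (q + q - 2*r) (contr q r f f) (contr q r f f)
          = ip (2*q - 2*r) (contr q r f f) (contr q r f f) := by
      intro r hr
      rw [show q + q - 2*r = 2*q - 2*r by omega]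
    rw [Finset.sum_congr rfl this]
    ring
  · simp only [Finset.mem_Icc]
    omega
  · simp only [Finset.mem_insert, Finset.mem_Icc]
    omega
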